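/- For a connected graph G of order n ≥ 2, the smallest signless Laplacian eigenvalue γₙ(G) is strictly less than the minimum vertex degree dₙ(G). -/

import Mathlib

open Matrix SimpleGraph Polynomial

/-- The signless Laplacian matrix Q(G) = D(G) + A(G). -/
noncomputable def signlessLaplacian {V : Type*} [Fintype V] [DecidableEq V]
    (G : SimpleGraph V) [DecidableRel G.Adj] : Matrix V V ℝ :=
  Matrix.diagonal (fun v => (G.degree v : ℝ)) + G.adjMatrix ℝ

/-- Eigenvalues (roots of the characteristic polynomial, with multiplicity),
sorted in non-increasing order. -/
noncomputable def eigsDesc {V : Type*} [Fintype V] [DecidableEq V] (M : Matrix V V ℝ) : List ℝ :=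
  (M.charpoly.roots.sort (· ≤ ·)).reverse

/-- Vertex degrees sorted in non-increasing order. -/
noncomputable def degsDesc {V : Type*} [Fintype V] [DecidableEq V]
    (G : SimpleGraph V) [DecidableRel G.Adj] : List ℕ :=
  ((Finset.univ.val.map fun v => G.degree v).sort (· ≤ ·)).reverse

section helpers

variable {V : Type*} [Fintype V] [DecidableEq V]

lemma charpoly_unitary_conj (U A : Matrix V V ℝ) (hU : U * Uᴴ = 1) (hU' : Uᴴ * U = 1) :
    (U * A * Uᴴ).charpoly = A.charpoly := by
  have hdetU : U.det ≠ 0 := by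
    intro h
    have : U.det * Uᴴ.det = 1 := by rw [← det_mul, hU, det_one]
    rw [h, zero_mul] at this
    exact zero_ne_one this
  have hdet : ((C : ℝ →+* ℝ[X]).mapMatrix U).det ≠ 0 := by
    rw [← RingHom.map_det]
    simpa using hdetU
  have key : charmatrix (U * A * Uᴴ) * (C : ℝ →+* ℝ[X]).mapMatrix U
      = (C : ℝ →+* ℝ[X]).mapMatrix U * charmatrix A := by
    unfold charmatrix
    have h1 : (C : ℝ →+* ℝ[X]).mapMatrix (U * A * Uᴴ)
        = (C : ℝ →+* ℝ[X]).mapMatrix U * (C : ℝ →+* ℝ[X]).mapMatrix A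
          * (C : ℝ →+* ℝ[X]).mapMatrix Uᴴ := by
      rw [_root_.map_mul, _root_.map_mul]
    have h2 : (C : ℝ →+* ℝ[X]).mapMatrix Uᴴ * (C : ℝ →+* ℝ[X]).mapMatrix U = 1 := by
      rw [← _root_.map_mul, hU']
      exact RingHom.map_one _
    have h3 : ∀ B : Matrix V V ℝ[X], Matrix.scalar V (X : ℝ[X]) * B
        = B * Matrix.scalar V (X : ℝ[X]) := fun B =>
      (Matrix.scalar_commute (X : ℝ[X]) (fun r => Commute.all _ r) B)
    rw [sub_mul, mul_sub, h3, h1, mul_assoc, mul_assoc, h2, mul_one]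
  have := congrArg Matrix.det key
  rw [det_mul, det_mul] at this
  unfold Matrix.charpoly
  rw [mul_comm] at this
  exact mul_left_cancel₀ hdet this

lemma charpoly_diagonal (d : V → ℝ) :
    (Matrix.diagonal d).charpoly = ∏ i, (X - C (d i)) := by
  have h : charmatrix (Matrix.diagonal d) = Matrix.diagonal (fun i => X - C (d i)) := by
    ext i j
    by_cases hij : i = j
    · subst hij; simp
    · rw [charmatrix_apply_ne _ _ _ hij, Matrix.diagonal_apply_ne _ hij,
        Matrix.diagonal_apply_ne _ hij, map_zero, neg_zero]
  rw [Matrix.charpoly, h, det_diagonal]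

lemma charpoly_eq_prod (A : Matrix V V ℝ) (hA : A.IsHermitian) :
    A.charpoly = ∏ i, (X - C (hA.eigenvalues i)) := by
  have hU := (Matrix.mem_unitaryGroup_iff).mp (hA.eigenvectorUnitary).2
  have hU' := (Matrix.mem_unitaryGroup_iff').mp (hA.eigenvectorUnitary).2
  have hcoe : (RCLike.ofReal ∘ hA.eigenvalues : V → ℝ) = hA.eigenvalues := rfl
  rw [Matrix.star_eq_conjTranspose] at hU hU'
  conv_lhs => rw [hA.spectral_theorem]
  rw [hcoe, Unitary.conjStarAlgAut_apply, Matrix.star_eq_conjTranspose, charpoly_unitary_conj _ _ hU hU', _root_.charpoly_diagonal]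

lemma roots_eq (A : Matrix V V ℝ) (hA : A.IsHermitian) :
    A.charpoly.roots = Finset.univ.val.map hA.eigenvalues := by
  rw [charpoly_eq_prod A hA, Finset.prod_eq_multiset_prod,
    show (Multiset.map (fun i => X - C (hA.eigenvalues i)) Finset.univ.val)
      = Multiset.map (fun a => X - C a) (Multiset.map hA.eigenvalues Finset.univ.val)
      from by rw [Multiset.map_map]; rfl]
  exact roots_multiset_prod_X_sub_C _

lemma getD_reverse_sort_min {α : Type*} [LinearOrder α] (s : Multiset α) (n : ℕ)
    (hn : Multiset.card s = n) (h : 0 < n) (d : α) :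
    ((s.sort (· ≤ ·)).reverse.getD (n - 1) d) ∈ s ∧
      ∀ x ∈ s, ((s.sort (· ≤ ·)).reverse.getD (n - 1) d) ≤ x := by
  set l := s.sort (· ≤ ·) with hl
  have hlen : l.length = n := by rw [hl, Multiset.length_sort, hn]
  have hlt : n - 1 < l.reverse.length := by
    rw [List.length_reverse, hlen]; omega
  have hget : l.reverse.getD (n - 1) d = l[0]'(by omega) := by
    rw [List.getD_eq_getElem _ _ hlt, List.getElem_reverse]
    congr 1
    rw [hlen]; omega
  have hsorted : l.Pairwise (· ≤ ·) := Multiset.pairwise_sort _ _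
  constructor
  · rw [hget, ← Multiset.mem_sort (· ≤ ·)]
    exact List.getElem_mem _
  · intro x hx
    rw [hget]
    rw [← Multiset.mem_sort (· ≤ ·)] at hx
    obtain ⟨j, hj, hjx⟩ := List.mem_iff_getElem.mp hx
    rcases Nat.eq_zero_or_pos j with h0 | h0
    · subst h0; rw [← hjx]
    · rw [← hjx]
      exact hsorted.rel_get_of_lt (by simpa using h0)

end helpers

theorem stmt_10 {V : Type*} [Fintype V] [DecidableEq V] (G : SimpleGraph V)
    [DecidableRel G.Adj] (hG : G.Connected) (hn : 2 ≤ Fintype.card V) :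
    (eigsDesc (signlessLaplacian G)).getD (Fintype.card V - 1) 0
      < ((degsDesc G).getD (Fintype.card V - 1) 0 : ℝ) := by
  classical
  set n := Fintype.card V with hnn
  have hQ : (signlessLaplacian G).IsHermitian := by
    unfold signlessLaplacian
    refine (Matrix.isHermitian_diagonal_iff.mpr (fun v => IsSelfAdjoint.all _)).add ?_
    show (G.adjMatrix ℝ)ᴴ = _
    rw [Matrix.conjTranspose_eq_transpose_of_trivial, SimpleGraph.transpose_adjMatrix]
  -- eigen side
  have hroots := roots_eq _ hQ
  have hcard : Multiset.card (signlessLaplacian G).charpoly.roots = n := by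
    rw [hroots]; simp [hnn]
  obtain ⟨hmem, hmin⟩ := getD_reverse_sort_min (signlessLaplacian G).charpoly.roots n hcard
    (by omega) 0
  set lam := ((signlessLaplacian G).charpoly.roots.sort (· ≤ ·)).reverse.getD (n - 1) 0 with hlam
  have heig : ∀ i : V, lam ≤ hQ.eigenvalues i := by
    intro i
    apply hmin
    rw [hroots]
    exact Multiset.mem_map.mpr ⟨i, Finset.mem_univ_val i, rfl⟩
  -- degree side
  have hdcard : Multiset.card (Finset.univ.val.map fun v => G.degree v) = n := by simp [hnn]
  obtain ⟨hdmem, -⟩ := getD_reverse_sort_min (Finset.univ.val.map fun v => G.degree v) n hdcard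
    (by omega) 0
  set m := (((Finset.univ.val.map fun v => G.degree v).sort (· ≤ ·)).reverse).getD (n - 1) 0
    with hm
  obtain ⟨v, -, hv⟩ := Multiset.mem_map.mp hdmem
  -- it suffices to show lam < degree v
  have hgoal : (eigsDesc (signlessLaplacian G)).getD (n - 1) 0 = lam := rfl
  have hgoal2 : (degsDesc G).getD (n - 1) 0 = m := rfl
  rw [hgoal, hgoal2, ← hv]
  -- PSD matrix M = Q - lam • 1
  set M : Matrix V V ℝ := signlessLaplacian G - lam • 1 with hM
  have hMpsd : M.PosSemidef := by
    have hU := (Matrix.mem_unitaryGroup_iff).mp (hQ.eigenvectorUnitary).2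
    rw [Matrix.star_eq_conjTranspose] at hU
    have hdecomp : M = (hQ.eigenvectorUnitary : Matrix V V ℝ) *
        Matrix.diagonal (fun i => hQ.eigenvalues i - lam) *
        (hQ.eigenvectorUnitary : Matrix V V ℝ)ᴴ := by
      have hspec := hQ.spectral_theorem
      have hcoe : (RCLike.ofReal ∘ hQ.eigenvalues : V → ℝ) = hQ.eigenvalues := rfl
      rw [hcoe, Unitary.conjStarAlgAut_apply, Matrix.star_eq_conjTranspose] at hspec
      have hsm : (hQ.eigenvectorUnitary : Matrix V V ℝ) * (lam • (1 : Matrix V V ℝ)) *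
          (hQ.eigenvectorUnitary : Matrix V V ℝ)ᴴ = lam • 1 := by
        rw [mul_smul_comm, mul_one, smul_mul_assoc, hU]
      have hdiag : Matrix.diagonal (fun i => hQ.eigenvalues i - lam)
          = Matrix.diagonal hQ.eigenvalues - lam • 1 := by
        ext i j
        by_cases h : i = j
        · subst h; simp [Matrix.one_apply_eq]
        · simp [Matrix.diagonal_apply_ne _ h, Matrix.one_apply_ne h]
      rw [hM, hdiag, mul_sub, sub_mul, hsm, ← hspec]
    rw [hdecomp]
    exact (Matrix.posSemidef_diagonal_iff.mpr
      (fun i => sub_nonneg.mpr (heig i))).mul_mul_conjTranspose_same _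
  -- v has a neighbor
  obtain ⟨u, hu⟩ : ∃ u, G.Adj v u := by
    obtain ⟨w, hw⟩ := Fintype.exists_ne_of_one_lt_card (by omega) v
    obtain ⟨p⟩ := hG.preconnected v w
    cases p with
    | nil => exact absurd rfl hw
    | cons hadj _ => exact ⟨_, hadj⟩
  -- test vector
  set e : V → ℝ := Pi.single v 1 with he
  have hne' : u ≠ v := (G.ne_of_adj hu).symm
  have hmv : M *ᵥ e = fun i => M i v := by
    ext i
    simp [he, Matrix.mulVec_single]
  have hMe : (M *ᵥ e) u = 1 := by
    rw [hmv, hM]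
    simp [signlessLaplacian, Matrix.one_apply_ne hne',
      Matrix.diagonal_apply_ne _ hne', hu.symm]
  have hdp : star e ⬝ᵥ (M *ᵥ e) = (G.degree v : ℝ) - lam := by
    have hse : star e = e := by
      rw [he]; ext i; simp [Pi.single_apply, apply_ite]
    rw [hse, hmv, he, dotProduct]
    rw [Finset.sum_eq_single v]
    · simp [hM, signlessLaplacian, Matrix.one_apply_eq]
    · intro b _ hb
      simp [Pi.single_apply, hb]
    · intro h; exact absurd (Finset.mem_univ v) h
  have hne : star e ⬝ᵥ (M *ᵥ e) ≠ 0 := by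
    rw [Ne, hMpsd.dotProduct_mulVec_zero_iff]
    intro h
    rw [funext_iff] at h
    have := h u
    rw [hMe] at this
    simp at this
  have hpos : 0 < star e ⬝ᵥ (M *ᵥ e) := lt_of_le_of_ne (hMpsd.dotProduct_mulVec_nonneg e) (Ne.symm hne)
  rw [hdp] at hpos
  linarith
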